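/- Under the same sub-ψ assumption with ψ CGF-like, for any m > 0 and x ∈ (0, m·b̄): P(∃t: S_t ≥ x + s(x/m)·(V_t − m)) ≤ l_0 · exp{−m ψ*(x/m)}, where s is the slope transform and ψ* is the Legendre-Fenchel transform of ψ. -/

import Mathlib

open MeasureTheory

/-- Supermartingale maximal inequality (finite horizon). -/
lemma supermart_maximal_aux {Ω : Type*} {m' : MeasurableSpace Ω}
    {μ : Measure Ω} [IsProbabilityMeasure μ] {ℱ : Filtration ℕ m'}
    {L : ℕ → Ω → ℝ} (hL : Supermartingale L ℱ μ)
    (hpos : ∀ t, 0 ≤ᵐ[μ] L t) {ε : ℝ} (hε : 0 < ε) (n : ℕ) :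
    μ {ω | ∃ k ≤ n, ε ≤ L k ω} ≤ ENNReal.ofReal ((∫ ω, L 0 ω ∂μ) / ε) := by
  set τ : Ω → WithTop ℕ := fun ω => (hittingBtwn L (Set.Ici ε) 0 n ω : ℕ) with hτdef
  have hτ : IsStoppingTime ℱ τ := hL.1.adapted.isStoppingTime_hittingBtwn measurableSet_Ici
  have hτn : ∀ ω, τ ω ≤ n := fun ω => WithTop.coe_le_coe.2 (hittingBtwn_le ω)
  -- optional stopping bound
  have hsubneg : Submartingale (-L) ℱ μ := hL.neg
  have hstop : (∫ ω, stoppedValue L τ ω ∂μ) ≤ ∫ ω, L 0 ω ∂μ := by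
    have h := hsubneg.expected_stoppedValue_mono (isStoppingTime_const ℱ 0) hτ
      (fun ω => WithTop.coe_le_coe.2 (Nat.zero_le _)) hτn
    have h0 : stoppedValue (-L) (fun _ => WithTop.some (0 : ℕ)) = fun ω => -(L 0 ω) := rfl
    have h1 : stoppedValue (-L) τ = fun ω => -(stoppedValue L τ ω) := rfl
    rw [h0, h1, integral_neg, integral_neg, neg_le_neg_iff] at h
    exact h
  have hint : Integrable (stoppedValue L τ) μ :=
    integrable_stoppedValue ℕ hτ hL.integrable hτn
  -- the event set
  set A : Set Ω := {ω | ∃ k ≤ n, ε ≤ L k ω} with hAdef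
  have hAmeas : MeasurableSet A := by
    have : A = ⋃ k, ⋃ _ : k ≤ n, {ω | ε ≤ L k ω} := by
      ext ω; simp [hAdef]
    rw [this]
    refine MeasurableSet.iUnion fun k => MeasurableSet.iUnion fun _ => ?_
    exact measurableSet_le measurable_const
      (((hL.1 k).measurable).le (ℱ.le k))
  have hptA : ∀ ω ∈ A, ε ≤ stoppedValue L τ ω := by
    intro ω hω
    obtain ⟨k, hk, hεk⟩ := hω
    have : stoppedValue L τ ω ∈ Set.Ici ε :=
      stoppedValue_hittingBtwn_mem ⟨k, ⟨Nat.zero_le _, hk⟩, hεk⟩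
    exact this
  have h1 : ε * (μ A).toReal ≤ ∫ ω in A, stoppedValue L τ ω ∂μ :=
    by
      have := setIntegral_ge_of_const_le hAmeas (measure_ne_top μ A) hptA hint.integrableOn
      rw [smul_eq_mul, mul_comm] at this
      exact this
  have hposτ : 0 ≤ᵐ[μ] stoppedValue L τ := by
    have hall : ∀ᵐ ω ∂μ, ∀ t, 0 ≤ L t ω := (ae_all_iff).2 hpos
    filter_upwards [hall] with ω hω
    exact hω _
  have h2 : ∫ ω in A, stoppedValue L τ ω ∂μ ≤ ∫ ω, stoppedValue L τ ω ∂μ :=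
    setIntegral_le_integral hint hposτ
  have h3 : ε * (μ A).toReal ≤ ∫ ω, L 0 ω ∂μ := le_trans h1 (le_trans h2 hstop)
  have h4 : (μ A).toReal ≤ (∫ ω, L 0 ω ∂μ) / ε := by
    rw [le_div_iff₀ hε]
    linarith [h3]
  calc μ A = ENNReal.ofReal (μ A).toReal := (ENNReal.ofReal_toReal (measure_ne_top μ A)).symm
    _ ≤ ENNReal.ofReal ((∫ ω, L 0 ω ∂μ) / ε) := ENNReal.ofReal_le_ofReal h4

theorem uniform_chernoff_optimized {Ω : Type*} {m' : MeasurableSpace Ω}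
    {μ : Measure Ω} [IsProbabilityMeasure μ]
    (ℱ : Filtration ℕ m') (S V : ℕ → Ω → ℝ) (ψ ψ' g : ℝ → ℝ) (lmax l0 : ℝ)
    (hl0 : 1 ≤ l0)
    (hS : Adapted ℱ S) (hV : Adapted ℱ V)
    (hS0 : ∀ ω, S 0 ω = 0) (hV0 : ∀ ω, V 0 ω = 0)
    (hVnonneg : ∀ t ω, 0 ≤ V t ω)
    (hsub : ∀ lam ∈ Set.Ico 0 lmax, ∃ L : ℕ → Ω → ℝ,
      Supermartingale L ℱ μ ∧ (∀ᵐ ω ∂μ, L 0 ω ≤ l0) ∧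
      ∀ t, ∀ᵐ ω ∂μ, Real.exp (lam * S t ω - ψ lam * V t ω) ≤ L t ω)
    -- ψ is CGF-like:
    (hconv : StrictConvexOn ℝ (Set.Ico 0 lmax) ψ)
    (hcd : ContDiffOn ℝ 2 ψ (Set.Ico 0 lmax))
    (hderiv : ∀ y ∈ Set.Ico 0 lmax, HasDerivWithinAt ψ (ψ' y) (Set.Ico 0 lmax) y)
    (h0 : ψ 0 = 0) (h0' : ψ' 0 = 0)
    (hsupψ : ∀ M : ℝ, ∃ y ∈ Set.Ico 0 lmax, M < ψ y)
    (x m : ℝ) (hm : 0 < m) (hx : 0 < x)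
    -- `x < m b̄`, i.e. `x/m < b̄ = sup ψ'`:
    (hxb : ∃ l ∈ Set.Ico 0 lmax, x / m < ψ' l)
    -- `g (x/m) = (ψ*)'(x/m) = (ψ')⁻¹(x/m)`:
    (hg : g (x / m) ∈ Set.Ioo 0 lmax ∧ ψ' (g (x / m)) = x / m) :
    μ {ω | ∃ t, x + (ψ (g (x / m)) / g (x / m)) * (V t ω - m) ≤ S t ω}
      ≤ ENNReal.ofReal
          (l0 * Real.exp
            (-(m * sSup ((fun l => l * (x / m) - ψ l) '' Set.Ico 0 lmax)))) := by
  obtain ⟨⟨hgpos, hglt⟩, hψ'g⟩ := hg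
  set u : ℝ := x / m with hudef
  set lam : ℝ := g u with hlamdef
  have hu : 0 < u := div_pos hx hm
  have hlammem : lam ∈ Set.Ico 0 lmax := ⟨le_of_lt hgpos, hglt⟩
  -- tangent-line inequality: lam maximizes l ↦ l*u - ψ l on Ico 0 lmax
  have htang : ∀ l ∈ Set.Ico 0 lmax, l * u - ψ l ≤ lam * u - ψ lam := by
    intro l hl
    rcases lt_trichotomy l lam with hlt | heq | hgt
    · have hslope := hconv.convexOn.slope_le_of_hasDerivWithinAt hl hlammem hlt
        (hderiv lam hlammem)
      rw [slope_def_field, hψ'g] at hslope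
      have hd : 0 < lam - l := sub_pos.2 hlt
      rw [div_le_iff₀ hd] at hslope
      nlinarith
    · rw [heq]
    · have hslope := hconv.convexOn.le_slope_of_hasDerivWithinAt hlammem hl hgt
        (hderiv lam hlammem)
      rw [slope_def_field, hψ'g] at hslope
      have hd : 0 < l - lam := sub_pos.2 hgt
      rw [le_div_iff₀ hd] at hslope
      nlinarith
  have hsSup : sSup ((fun l => l * u - ψ l) '' Set.Ico 0 lmax) = lam * u - ψ lam := by
    refine IsGreatest.csSup_eq ⟨⟨lam, hlammem, rfl⟩, ?_⟩
    rintro _ ⟨l, hl, rfl⟩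
    exact htang l hl
  -- the exponential threshold
  set a : ℝ := lam * x - ψ lam * m with hadef
  have hma : m * (lam * u - ψ lam) = a := by
    have hxm : m * (x / m) = x := by field_simp
    rw [hadef, hudef]; linear_combination lam * hxm
  set ε : ℝ := Real.exp a with hεdef
  have hε : 0 < ε := Real.exp_pos a
  -- get the supermartingale
  obtain ⟨L, hLsup, hL0, hLdom⟩ := hsub lam hlammem
  have hLdomall : ∀ᵐ ω ∂μ, ∀ t, Real.exp (lam * S t ω - ψ lam * V t ω) ≤ L t ω :=
    (ae_all_iff).2 hLdom
  have hLpos : ∀ t, 0 ≤ᵐ[μ] L t := by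
    intro t
    filter_upwards [hLdom t] with ω hω
    exact le_trans (Real.exp_pos _).le hω
  -- event inclusion into union of finite-horizon events
  set A : ℕ → Set Ω := fun n => {ω | ∃ k ≤ n, ε ≤ L k ω} with hAdef
  have hincl : ∀ᵐ ω ∂μ, ω ∈ {ω | ∃ t, x + (ψ lam / lam) * (V t ω - m) ≤ S t ω} →
      ω ∈ ⋃ n, A n := by
    filter_upwards [hLdomall] with ω hω hmem
    obtain ⟨t, ht⟩ := hmem
    have hlam0 : lam ≠ 0 := ne_of_gt hgpos
    have hmul : lam * (x + (ψ lam / lam) * (V t ω - m)) ≤ lam * S t ω :=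
      mul_le_mul_of_nonneg_left ht (le_of_lt hgpos)
    have hexpand : lam * (x + (ψ lam / lam) * (V t ω - m))
        = lam * x + ψ lam * (V t ω - m) := by
      field_simp
    rw [hexpand] at hmul
    have hae : a ≤ lam * S t ω - ψ lam * V t ω := by
      simp only [hadef]; nlinarith
    have hεle : ε ≤ L t ω :=
      le_trans (Real.exp_le_exp.2 hae) (hω t)
    exact Set.mem_iUnion.2 ⟨t, t, le_refl t, hεle⟩
  have hmono : Monotone A := by
    intro i j hij ω hω
    obtain ⟨k, hk, h⟩ := hω
    exact ⟨k, le_trans hk hij, h⟩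
  have hintL0 : ∫ ω, L 0 ω ∂μ ≤ l0 := by
    calc ∫ ω, L 0 ω ∂μ ≤ ∫ _ω, l0 ∂μ :=
          integral_mono_ae (hLsup.integrable 0) (integrable_const l0) hL0
      _ = l0 := by simp
  have hbound : ∀ n, μ (A n) ≤ ENNReal.ofReal (l0 / ε) := by
    intro n
    refine le_trans (supermart_maximal_aux hLsup hLpos hε n) ?_
    exact ENNReal.ofReal_le_ofReal ((div_le_div_iff_of_pos_right hε).2 hintL0)
  have hfinal : ENNReal.ofReal (l0 / ε) =
      ENNReal.ofReal (l0 * Real.exp (-(m * sSup ((fun l => l * u - ψ l) '' Set.Ico 0 lmax)))) := by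
    rw [hsSup, hma, Real.exp_neg, div_eq_mul_inv]
  calc μ {ω | ∃ t, x + (ψ lam / lam) * (V t ω - m) ≤ S t ω}
      ≤ μ (⋃ n, A n) := measure_mono_ae hincl
    _ = ⨆ n, μ (A n) := hmono.measure_iUnion
    _ ≤ ENNReal.ofReal (l0 / ε) := iSup_le hbound
    _ = _ := hfinal
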